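/- Any critical point P* > 0 of the cached area power consumption 𝒫^(c)(P) = A P^{−2/(2+ε)}(P + P_s + P_d f_0^{1 − (λ_u/A) P^{2/(2+ε)}}) with ε > 0, A > 0, P_s > 0, P_d > 0, f_0 > 1, λ_u > 0 satisfies P* > 2P_s/ε. -/

import Mathlib

theorem apc_caching_critical_point_lower_bound (ε A Ps Pd f₀ lamU : ℝ)
    (hε : 0 < ε) (hA : 0 < A) (hPs : 0 < Ps) (hPd : 0 < Pd) (hf₀ : 1 < f₀) (hlamU : 0 < lamU) :
    ∀ P : ℝ, 0 < P →
      deriv (fun P : ℝ =>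
        A * P ^ (-2 / (2 + ε)) *
          (P + Ps + Pd * f₀ ^ (1 - (lamU / A) * P ^ (2 / (2 + ε))))) P = 0 →
      P > 2 * Ps / ε := by
  intro P hP hderiv
  have h2ε : (0:ℝ) < 2 + ε := by linarith
  set c : ℝ := 2 / (2 + ε) with hc
  have hc0 : 0 < c := by positivity
  have hc1 : c < 1 := by
    rw [hc, div_lt_one h2ε]; linarith
  have hneg : -2 / (2 + ε) = -c := by rw [hc]; ring
  -- derivatives
  have h1 : HasDerivAt (fun P : ℝ => P ^ (-2 / (2 + ε))) ((-2/(2+ε)) * P ^ ((-2/(2+ε)) - 1)) P :=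
    Real.hasDerivAt_rpow_const (Or.inl hP.ne')
  have h2 : HasDerivAt (fun P : ℝ => P ^ c) (c * P ^ (c - 1)) P :=
    Real.hasDerivAt_rpow_const (Or.inl hP.ne')
  have h3 : HasDerivAt (fun P : ℝ => 1 - (lamU / A) * P ^ c)
      (-((lamU / A) * (c * P ^ (c - 1)))) P := (h2.const_mul (lamU / A)).const_sub 1
  have hf₀' : (0:ℝ) < f₀ := by linarith
  have h4 : HasDerivAt (fun P : ℝ => f₀ ^ (1 - (lamU / A) * P ^ c))
      ((f₀ ^ (1 - (lamU / A) * P ^ c) * Real.log f₀) * (-((lamU / A) * (c * P ^ (c - 1))))) P :=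
    (Real.hasStrictDerivAt_const_rpow hf₀' _).hasDerivAt.comp P h3
  have h5 : HasDerivAt (fun P : ℝ => P + Ps + Pd * f₀ ^ (1 - (lamU / A) * P ^ c))
      (1 + Pd * ((f₀ ^ (1 - (lamU / A) * P ^ c) * Real.log f₀) * (-((lamU / A) * (c * P ^ (c - 1)))))) P := by
    exact (((hasDerivAt_id P).add_const Ps).add (h4.const_mul Pd))
  have h6 : HasDerivAt (fun P : ℝ =>
      A * P ^ (-2 / (2 + ε)) * (P + Ps + Pd * f₀ ^ (1 - (lamU / A) * P ^ (2 / (2 + ε)))))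
      ((A * ((-2/(2+ε)) * P ^ ((-2/(2+ε)) - 1))) * (P + Ps + Pd * f₀ ^ (1 - (lamU / A) * P ^ c))
        + (A * P ^ (-2 / (2 + ε))) *
          (1 + Pd * ((f₀ ^ (1 - (lamU / A) * P ^ c) * Real.log f₀) * (-((lamU / A) * (c * P ^ (c - 1))))))) P :=
    (h1.const_mul A).mul h5
  rw [h6.deriv, hneg] at hderiv
  -- abbreviations
  set F : ℝ := f₀ ^ (1 - (lamU / A) * P ^ c) with hF
  set Q : ℝ := P ^ c with hQ
  set R : ℝ := P ^ (-c) with hR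
  set L : ℝ := Real.log f₀ with hL
  have hQpos : 0 < Q := Real.rpow_pos_of_pos hP _
  have hRpos : 0 < R := Real.rpow_pos_of_pos hP _
  have hFpos : 0 < F := Real.rpow_pos_of_pos hf₀' _
  have hLpos : 0 < L := Real.log_pos hf₀
  have hRQ : R * Q = 1 := by
    rw [hR, hQ, ← Real.rpow_add hP]; simp
  have e1 : P ^ (-c - 1) = R / P := by
    rw [hR, Real.rpow_sub hP, Real.rpow_one]
  have e2 : P ^ (c - 1) = Q / P := by
    rw [hQ, Real.rpow_sub hP, Real.rpow_one]
  rw [e1, e2] at hderiv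
  -- extract algebraic relation
  have hfac : (A * R * P) *
      (A * (P - c * P - c * Ps) - (A * c * Pd * F + Pd * F * L * lamU * c * Q)) = 0 := by
    have h := hderiv
    field_simp at h
    linear_combination (A * P) * h
  have hARP : (A * R * P) ≠ 0 := by positivity
  have key : A * (P - c * P - c * Ps) = A * c * Pd * F + Pd * F * L * lamU * c * Q := by
    rcases mul_eq_zero.mp hfac with h | h
    · exact absurd h hARP
    · linarith
  have hpos : 0 < A * c * Pd * F + Pd * F * L * lamU * c * Q := by positivity
  have h7 : 0 < P - c * P - c * Ps := by nlinarith [key, hpos, hA]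
  have hεc : c * (2 + ε) = 2 := by rw [hc]; field_simp
  have hm : (2 + ε) * (P - c * P - c * Ps) = ε * P - 2 * Ps := by
    linear_combination (-(P + Ps)) * hεc
  rw [gt_iff_lt, div_lt_iff₀ hε]
  nlinarith [mul_pos h2ε h7, hm]
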